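/- Let F_q be a finite field and let n be a positive integer such that (1) q ≢ 3 (mod 4) or 8 does not divide n, and (2) rad(n) divides q − 1. Then every monic irreducible factor of x^n − 1 in F_q[x] is a binomial of the form x^t − a, where the positive integer t and a ∈ F_q^* satisfy: t divides n, ord_q(a) divides gcd(q − 1, n/t), rad(t) divides ord_q(a), gcd(t, (q − 1)/ord_q(a)) = 1, and if 4 divides t then q ≡ 1 (mod 4). -/

import Mathlib

lemma aux_v2_odd {q s : ℕ} (hq : 2 ≤ q) (hqodd : Odd q) (hs : Odd s) :
    (q ^ s - 1).factorization 2 = (q - 1).factorization 2 := by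
  have hs0 : s ≠ 0 := by rintro rfl; simp at hs
  set T : ℕ := ∑ i ∈ Finset.range s, q ^ i with hT
  have hmul : (q - 1) * T = q ^ s - 1 := by
    have : ((∑ i ∈ Finset.range s, (q:ℤ) ^ i)) * ((q:ℤ) - 1) = (q:ℤ) ^ s - 1 :=
      geom_sum_mul _ s
    have hq1 : (1:ℕ) ≤ q := by omega
    have hqs : (1:ℕ) ≤ q ^ s := Nat.one_le_pow _ _ (by omega)
    zify [hq1, hqs, hT]
    push_cast
    linarith [this]
  have hTodd : Odd T := by
    rw [Nat.odd_iff, hT, Finset.sum_nat_mod]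
    have : ∀ i ∈ Finset.range s, q ^ i % 2 = 1 := fun i _ => Nat.odd_iff.mp (hqodd.pow)
    rw [Finset.sum_congr rfl this]
    simpa using Nat.odd_iff.mp hs
  have hT0 : T ≠ 0 := by rintro h; exact (by simp [h] : ¬ Odd 0) (h ▸ hTodd)
  have hq10 : q - 1 ≠ 0 := by omega
  rw [← hmul, Nat.factorization_mul hq10 hT0]
  simp [Nat.factorization_eq_zero_of_not_dvd (Nat.two_dvd_ne_zero.mpr (Nat.odd_iff.mp hTodd))]

-- main order lemma
lemma aux_dvd {q e s : ℕ} (hq : 2 ≤ q) (he : 0 < e) (hs : 0 < s)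
    (hrad : ∀ p : ℕ, p.Prime → p ∣ e → p ∣ q - 1)
    (h8 : q % 4 = 1 ∨ ¬ (8 ∣ e))
    (hdvd : e ∣ q ^ s - 1) :
    e / Nat.gcd e (q - 1) ∣ s := by
  have hm0 : q - 1 ≠ 0 := by omega
  have hqs1 : 1 ≤ q ^ s := Nat.one_le_pow _ _ (by omega)
  have hqs : q ^ s - 1 ≠ 0 := by
    have : 2 ≤ q ^ s := le_trans hq (Nat.le_self_pow hs.ne' q)
    omega
  set g := Nat.gcd e (q - 1) with hgdef
  have hge : g ∣ e := Nat.gcd_dvd_left _ _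
  have ht0 : e / g ≠ 0 := by
    have hg0 : 0 < g := Nat.gcd_pos_of_pos_left _ he
    exact (Nat.div_pos (Nat.le_of_dvd he hge) hg0).ne'
  rw [← Nat.factorization_le_iff_dvd ht0 hs.ne', Finsupp.le_def]
  intro p
  by_cases hp : p.Prime
  swap
  · simp [Nat.factorization_eq_zero_of_not_prime _ hp]
  have hfac : (e / g).factorization p = e.factorization p - min (e.factorization p) ((q-1).factorization p) := by
    rw [Nat.factorization_div hge, hgdef, Nat.factorization_gcd he.ne' hm0]
    simp [Finsupp.inf_apply]
  rcases Nat.eq_zero_or_pos ((e / g).factorization p) with h0 | hpos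
  · simp [h0]
  -- now p ∣ e, and e.factorization p > (q-1).factorization p
  have hAB : (q-1).factorization p < e.factorization p := by
    rw [hfac] at hpos; omega
  have hBmin : min (e.factorization p) ((q-1).factorization p) = (q-1).factorization p := by omega
  rw [hfac, hBmin]
  have hpe : p ∣ e := (hp.dvd_iff_one_le_factorization he.ne').mpr (by omega)
  have hpm : p ∣ q - 1 := hrad p hp hpe
  have hB1 : 1 ≤ (q-1).factorization p := (hp.dvd_iff_one_le_factorization hm0).mp hpm
  have hpq : ¬ p ∣ q := by
    intro h
    have h1 : p ∣ q - (q - 1) := Nat.dvd_sub h hpm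
    rw [show q - (q-1) = 1 by omega] at h1
    exact hp.one_lt.ne' (Nat.eq_one_of_dvd_one h1)
  have hV : e.factorization p ≤ (q ^ s - 1).factorization p :=
    (Nat.factorization_le_iff_dvd he.ne' hqs).mpr hdvd p
  by_cases hp2 : p = 2
  · -- p = 2
    subst hp2
    have hqodd : Odd q := by
      rcases Nat.even_or_odd q with hev | hod
      · exfalso; exact hpq hev.two_dvd
      · exact hod
    rcases Nat.even_or_odd s with hseven | hsodd
    · -- s even
      rcases h8 with h41 | h8e
      · -- q ≡ 1 mod 4
        haveI : Fact (Nat.Prime 2) := ⟨Nat.prime_two⟩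
        have hlte := padicValNat.pow_two_sub_pow (x := q) (y := 1) (by omega) (by simpa using hpm)
          (by simpa using hpq) hs.ne' hseven
        simp only [one_pow] at hlte
        have hqodd2 := Nat.odd_iff.mp hqodd
        have hq1v : (q + 1).factorization 2 = 1 := by
          have h2 : 1 ≤ (q+1).factorization 2 :=
            (Nat.prime_two.dvd_iff_one_le_factorization (by omega)).mp (by omega)
          have h4 : ¬ (2 ≤ (q+1).factorization 2) := by
            intro hcon
            have h44 := (Nat.prime_two.pow_dvd_iff_le_factorization (k := 2) (n := q+1)
              (by omega)).mpr hcon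
            norm_num at h44
            omega
          omega
        simp only [← Nat.factorization_def _ Nat.prime_two] at hlte
        omega
      · -- ¬ 8 ∣ e : then e.factorization 2 ≤ 2 and (q-1).factorization 2  ≥ 1 ; also s even gives ≥1
        have hA2 : e.factorization 2 ≤ 2 := by
          by_contra hcon
          exact h8e ((Nat.prime_two.pow_dvd_iff_le_factorization (k := 3) he.ne').mpr (by omega))
        have hs2 : 1 ≤ s.factorization 2 :=
          (Nat.prime_two.dvd_iff_one_le_factorization hs.ne').mp hseven.two_dvd
        omega
    · -- s odd : contradiction with hAB
      exfalso
      have := aux_v2_odd hq hqodd hsodd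
      omega
  · -- p odd
    haveI : Fact (Nat.Prime p) := ⟨hp⟩
    have hlte := padicValNat.pow_sub_pow (p := p) (x := q) (y := 1) (hp.odd_of_ne_two hp2)
      (by omega) (by simpa using hpm) hpq hs.ne'
    simp only [one_pow] at hlte
    simp only [← Nat.factorization_def _ hp] at hlte
    omega

lemma aux2 {e m p : ℕ} (he : e ≠ 0) (hm : m ≠ 0) (pp : p.Prime)
    (hpt : p ∣ e / Nat.gcd e m) (hpm : p ∣ m) :
    p ∣ Nat.gcd e m ∧ ¬ (Nat.gcd e m * p ∣ m) := by
  have hge : Nat.gcd e m ∣ e := Nat.gcd_dvd_left _ _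
  have ht0 : e / Nat.gcd e m ≠ 0 := by
    have hg0 : 0 < Nat.gcd e m := Nat.gcd_pos_of_pos_left _ (Nat.pos_of_ne_zero he)
    exact (Nat.div_pos (Nat.le_of_dvd (Nat.pos_of_ne_zero he) hge) hg0).ne'
  have h1 : 1 ≤ (e / Nat.gcd e m).factorization p :=
    (pp.dvd_iff_one_le_factorization ht0).mp hpt
  have hfac : (e / Nat.gcd e m).factorization p
      = e.factorization p - min (e.factorization p) (m.factorization p) := by
    rw [Nat.factorization_div hge, Nat.factorization_gcd he hm]
    simp [Finsupp.inf_apply]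
  have hB1 : 1 ≤ m.factorization p := (pp.dvd_iff_one_le_factorization hm).mp hpm
  have hBA : m.factorization p < e.factorization p := by omega
  have hg0 : Nat.gcd e m ≠ 0 := Nat.gcd_ne_zero_left he
  have hgf : (Nat.gcd e m).factorization p = m.factorization p := by
    rw [Nat.factorization_gcd he hm]; simp [Finsupp.inf_apply]; omega
  constructor
  · exact (pp.dvd_iff_one_le_factorization hg0).mpr (by omega)
  · intro hcon
    have hle := (Nat.factorization_le_iff_dvd (Nat.mul_ne_zero hg0 pp.pos.ne') hm).mpr hcon p
    rw [Nat.factorization_mul hg0 pp.pos.ne'] at hle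
    simp only [Finsupp.add_apply, pp.factorization, Finsupp.single_eq_same] at hle
    omega

lemma aux3 {e m : ℕ} (he : e ≠ 0) (hm : m ≠ 0) (h4 : 4 ∣ e / Nat.gcd e m)
    (h2m : 2 ∣ m) (hm4 : ¬ 4 ∣ m) : 8 ∣ e := by
  have hB1 : 1 ≤ m.factorization 2 := (Nat.prime_two.dvd_iff_one_le_factorization hm).mp h2m
  have hge : Nat.gcd e m ∣ e := Nat.gcd_dvd_left _ _
  have ht0 : e / Nat.gcd e m ≠ 0 := by
    have hg0 : 0 < Nat.gcd e m := Nat.gcd_pos_of_pos_left _ (Nat.pos_of_ne_zero he)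
    exact (Nat.div_pos (Nat.le_of_dvd (Nat.pos_of_ne_zero he) hge) hg0).ne'
  have hfac : (e / Nat.gcd e m).factorization 2
      = e.factorization 2 - min (e.factorization 2) (m.factorization 2) := by
    rw [Nat.factorization_div hge, Nat.factorization_gcd he hm]
    simp [Finsupp.inf_apply]
  have ht2 : 2 ≤ (e / Nat.gcd e m).factorization 2 := by
    have := (Nat.prime_two.pow_dvd_iff_le_factorization (k := 2) ht0).mpr
    have h4' : (2:ℕ)^2 ∣ e / Nat.gcd e m := by norm_num; exact h4
    exact (Nat.prime_two.pow_dvd_iff_le_factorization (k := 2) ht0).mp h4'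
  have hmB : m.factorization 2 ≤ 1 := by
    by_contra hcon
    exact hm4 (by
      have := (Nat.prime_two.pow_dvd_iff_le_factorization (k := 2) hm).mpr (by omega)
      norm_num at this; exact this)
  have : 3 ≤ e.factorization 2 := by omega
  have := (Nat.prime_two.pow_dvd_iff_le_factorization (k := 3) he).mpr this
  norm_num at this; exact this
open Polynomial

lemma mem_range_of_pow_card_sub_one {F K : Type*} [Field F] [Fintype F] [Field K] [Fintype K]
    [Algebra F K] {β : K} (hβ : β ^ (Fintype.card F - 1) = 1) :
    ∃ a : F, algebraMap F K a = β := by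
  classical
  set q := Fintype.card F with hqdef
  have hq2 : 1 < q := Fintype.one_lt_card
  set φ := algebraMap F K
  have hinj : Function.Injective φ := (algebraMap F K).injective
  set P : K[X] := X ^ (q - 1) - C 1 with hP
  have hP0 : P ≠ 0 := X_pow_sub_C_ne_zero (by omega) 1
  set R : Finset K := P.roots.toFinset with hR
  set T : Finset K := (Finset.univ.erase (0:F)).image φ with hT
  have hmem : ∀ x : K, x ^ (q-1) = 1 → x ∈ R := by
    intro x hx
    rw [hR, Multiset.mem_toFinset, mem_roots hP0]
    simp [hP, hx]
  have hTR : T ⊆ R := by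
    intro x hx
    rw [hT, Finset.mem_image] at hx
    obtain ⟨y, hy, rfl⟩ := hx
    have hy0 : y ≠ 0 := (Finset.mem_erase.mp hy).1
    apply hmem
    rw [← map_pow, FiniteField.pow_card_sub_one_eq_one y hy0, map_one]
  have hcardT : T.card = q - 1 := by
    rw [hT, Finset.card_image_of_injective _ hinj,
      Finset.card_erase_of_mem (Finset.mem_univ _), Finset.card_univ]
  have hcardR : R.card ≤ q - 1 := by
    calc R.card ≤ Multiset.card P.roots := Multiset.toFinset_card_le _
    _ ≤ P.natDegree := card_roots' P
    _ = q - 1 := by rw [hP, natDegree_X_pow_sub_C]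
  have hRT : R = T := (Finset.eq_of_subset_of_card_le hTR (by omega)).symm
  have hβR : β ∈ T := hRT ▸ hmem β hβ
  rw [hT, Finset.mem_image] at hβR
  obtain ⟨y, _, hy⟩ := hβR
  exact ⟨y, hy⟩

/-- If `q ≢ 3 (mod 4)` or `8 ∤ n`, and `rad(n) ∣ q - 1`, then every monic irreducible
factor of `x^n - 1` over `F_q` is a binomial `x^t - a` with `t ∣ n`,
`ord_q(a) ∣ gcd(q-1, n/t)`, `rad(t) ∣ ord_q(a)`, `gcd(t, (q-1)/ord_q(a)) = 1`, and
`4 ∣ t → q ≡ 1 (mod 4)`. -/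
theorem every_irreducible_factor_is_binomial {F : Type*} [Field F] [Fintype F]
    (q : ℕ) (hq : q = Fintype.card F) (n : ℕ) (hn : 0 < n)
    (h1 : q % 4 ≠ 3 ∨ ¬ (8 ∣ n))
    (h2 : (∏ p ∈ n.primeFactors, p) ∣ (q - 1)) :
    ∀ f : Polynomial F, f.Monic → Irreducible f → f ∣ (X ^ n - 1 : Polynomial F) →
      ∃ (t : ℕ) (a : F), 0 < t ∧ a ≠ 0 ∧ f = X ^ t - C a ∧
        t ∣ n ∧ orderOf a ∣ Nat.gcd (q - 1) (n / t) ∧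
        (∏ p ∈ t.primeFactors, p) ∣ orderOf a ∧
        Nat.gcd t ((q - 1) / orderOf a) = 1 ∧
        (4 ∣ t → q % 4 = 1) := by
  intro f hmonic hirr hfdvd
  classical
  have hq2 : 2 ≤ q := hq ▸ Fintype.one_lt_card
  have hm0 : q - 1 ≠ 0 := by omega
  haveI : Fact (Irreducible f) := ⟨hirr⟩
  set K := AdjoinRoot f with hK
  have hf0 : f ≠ 0 := hirr.ne_zero
  let pb := AdjoinRoot.powerBasis hf0
  letI : Fintype K := Module.fintypeOfFintype pb.basis
  set α : K := AdjoinRoot.root f with hα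
  -- α ^ n = 1
  have hαn : α ^ n = 1 := by
    have h0 : AdjoinRoot.mk f (X ^ n - 1) = 0 := AdjoinRoot.mk_eq_zero.mpr hfdvd
    have : α ^ n - 1 = 0 := by
      simpa [map_sub, map_pow, map_one, AdjoinRoot.mk_X] using h0
    exact sub_eq_zero.mp this
  have hα0 : α ≠ 0 := by
    intro h; rw [h, zero_pow hn.ne'] at hαn; exact zero_ne_one hαn
  set e := orderOf α with he_def
  have hfin : IsOfFinOrder α := isOfFinOrder_iff_pow_eq_one.mpr ⟨n, hn, hαn⟩
  have he : 0 < e := hfin.orderOf_pos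
  have hedvd : e ∣ n := orderOf_dvd_of_pow_eq_one hαn
  have hrad : ∀ p : ℕ, p.Prime → p ∣ e → p ∣ q - 1 := by
    intro p pp hpe
    refine dvd_trans (Finset.dvd_prod_of_mem _ ?_) h2
    exact Nat.mem_primeFactors.mpr ⟨pp, hpe.trans hedvd, hn.ne'⟩
  set g := Nat.gcd e (q - 1) with hgdef
  have hgdvd : g ∣ e := Nat.gcd_dvd_left _ _
  have hgm : g ∣ q - 1 := Nat.gcd_dvd_right _ _
  have hg0 : 0 < g := Nat.gcd_pos_of_pos_left _ he
  set t := e / g with htdef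
  have ht0 : 0 < t := Nat.div_pos (Nat.le_of_dvd he hgdvd) hg0
  have htdvd_e : t ∣ e := Nat.div_dvd_of_dvd hgdvd
  have htn : t ∣ n := htdvd_e.trans hedvd
  have het : e / t = g := Nat.div_div_self hgdvd he.ne'
  -- order of α ^ t
  have hordαt : orderOf (α ^ t) = g := by
    rw [orderOf_pow' α ht0.ne', ← he_def, Nat.gcd_eq_right htdvd_e, het]
  -- α ^ t lies in the base field
  have hβ : (α ^ t) ^ (q - 1) = 1 := by
    rw [← orderOf_dvd_iff_pow_eq_one, hordαt]; exact hgm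
  obtain ⟨a, ha⟩ : ∃ a : F, algebraMap F K a = α ^ t :=
    mem_range_of_pow_card_sub_one (by rw [← hq]; exact hβ)
  have ha0 : a ≠ 0 := by
    intro h0
    rw [h0, map_zero] at ha
    exact pow_ne_zero t hα0 ha.symm
  have horda : orderOf a = g := by
    rw [← hordαt, ← ha]
    exact (orderOf_injective (algebraMap F K).toMonoidHom (algebraMap F K).injective a).symm
  -- f is the minimal polynomial of α
  have haev : (Polynomial.aeval α) f = 0 := by
    rw [AdjoinRoot.aeval_eq, AdjoinRoot.mk_self]
  have hf_min : f = minpoly F α := minpoly.eq_of_irreducible_of_monic hirr haev hmonic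
  -- f divides X^t - C a
  have hdvd2 : f ∣ X ^ t - C a := by
    rw [hf_min]
    apply minpoly.dvd
    rw [map_sub, map_pow, aeval_X, aeval_C, ha, sub_self]
  set d := f.natDegree with hd_def
  have hd0 : 0 < d := hirr.natDegree_pos
  have hdle : d ≤ t := by
    have := natDegree_le_of_dvd hdvd2 (X_pow_sub_C_ne_zero ht0 a)
    rwa [natDegree_X_pow_sub_C] at this
  -- card K = q ^ d
  have hcardK : Fintype.card K = q ^ d := by
    rw [Module.card_fintype pb.basis, ← hq, Fintype.card_fin, AdjoinRoot.powerBasis_dim]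
  have hedq : e ∣ q ^ d - 1 := by
    apply orderOf_dvd_of_pow_eq_one
    have := FiniteField.pow_card_sub_one_eq_one α hα0
    rwa [hcardK] at this
  have h8' : q % 4 = 1 ∨ ¬ (8 ∣ e) := by
    by_cases h8e : 8 ∣ e
    · left
      have h2m : 2 ∣ q - 1 := hrad 2 Nat.prime_two (dvd_trans (by norm_num) h8e)
      rcases h1 with hq3 | h8n
      · omega
      · exact absurd (h8e.trans hedvd) h8n
    · right; exact h8e
  have htd : t ∣ d := aux_dvd hq2 he hd0 hrad h8' hedq
  have htd_eq : t = d := Nat.le_antisymm (Nat.le_of_dvd hd0 htd) hdle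
  -- conclude f = X^t - C a
  have hfeq : f = X ^ t - C a := by
    obtain ⟨c, hc⟩ := hdvd2
    have hg_ne : (X ^ t - C a : F[X]) ≠ 0 := X_pow_sub_C_ne_zero ht0 a
    have hc0 : c ≠ 0 := by rintro rfl; rw [mul_zero] at hc; exact hg_ne hc
    have hdeg : c.natDegree = 0 := by
      have := congrArg natDegree hc
      rw [natDegree_X_pow_sub_C, natDegree_mul hf0 hc0, ← hd_def, ← htd_eq] at this
      omega
    have hclead : c.coeff 0 = 1 := by
      have h := congrArg leadingCoeff hc
      rw [leadingCoeff_mul, hmonic.leadingCoeff, one_mul,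
        (monic_X_pow_sub_C a ht0.ne').leadingCoeff] at h
      rw [← hdeg]
      exact h.symm
    have : c = 1 := by
      rw [eq_C_of_natDegree_eq_zero hdeg, hclead, map_one]
    rw [hc, this, mul_one]
  refine ⟨t, a, ht0, ha0, hfeq, htn, ?_, ?_, ?_, ?_⟩
  · -- orderOf a ∣ gcd (q-1) (n/t)
    rw [horda]
    refine Nat.dvd_gcd hgm ?_
    obtain ⟨k, hk⟩ := hedvd
    have : n / t = k * g := by
      rw [hk, mul_comm, Nat.mul_div_assoc k htdvd_e, het]
    rw [this]
    exact dvd_mul_left g k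
  · -- rad t ∣ orderOf a
    rw [horda]
    refine Finset.prod_primes_dvd g (fun p hp => (Nat.prime_of_mem_primeFactors hp).prime)
      (fun p hp => ?_)
    have pp := Nat.prime_of_mem_primeFactors hp
    have hpt : p ∣ t := Nat.dvd_of_mem_primeFactors hp
    exact (aux2 he.ne' hm0 pp hpt (hrad p pp (hpt.trans htdvd_e))).1
  · -- gcd t ((q-1)/orderOf a) = 1
    rw [horda]
    by_contra hcon
    set G := Nat.gcd t ((q - 1) / g) with hGdef
    have hG0 : G ≠ 0 := Nat.gcd_ne_zero_left ht0.ne'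
    have pp : (G.minFac).Prime := Nat.minFac_prime hcon
    have hpt : G.minFac ∣ t := (Nat.minFac_dvd G).trans (Nat.gcd_dvd_left _ _)
    have hpdiv : G.minFac ∣ (q - 1) / g := (Nat.minFac_dvd G).trans (Nat.gcd_dvd_right _ _)
    have hpm : G.minFac ∣ q - 1 := hrad _ pp (hpt.trans htdvd_e)
    have : g * G.minFac ∣ q - 1 := (Nat.dvd_div_iff_mul_dvd hgm).mp hpdiv
    exact (aux2 he.ne' hm0 pp hpt hpm).2 this
  · -- 4 ∣ t → q % 4 = 1
    intro h4t
    have h2e : 2 ∣ e := (dvd_trans (by norm_num : (2:ℕ) ∣ 4) h4t).trans htdvd_e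
    have h2m : 2 ∣ q - 1 := hrad 2 Nat.prime_two h2e
    by_contra hq41
    have hq43 : q % 4 = 3 := by omega
    have h8n : ¬ (8 ∣ n) := by
      rcases h1 with h | h
      · exact absurd hq43 h
      · exact h
    have hm4 : ¬ (4 ∣ q - 1) := by omega
    exact h8n ((aux3 he.ne' hm0 h4t h2m hm4).trans hedvd)
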